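/- Let G be an r-regular simple graph with n vertices and m edges, where r ≥ 2 (so that m ≥ n), and let q_1 ≤ q_2 ≤ … ≤ q_n = 2r be the eigenvalues of Q(G) listed with multiplicity. Then f(λ, G^{0++}) = [(λ-r)(λ-4r+2) - 2r]·(λ-2r+2)^{m-n}·∏_{i=1}^{n-1}[(λ-r)(λ-2r+2-q_i) - q_i]. -/

import Mathlib

open Classical

/-- The four symbols `0, 1, +, -` used in `xyz`-transformations. -/
inductive XYZ : Type
  | zero | one | plus | minus

namespace XYZ

/-- The relation on the vertices of a graph `H` given by a symbol:
`0` gives the empty graph, `1` the complete graph, `+` the graph itself,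
`-` its complement. -/
def rel {W : Type*} (H : SimpleGraph W) : XYZ → W → W → Prop
  | .zero => fun _ _ => False
  | .one  => fun u v => u ≠ v
  | .plus => fun u v => H.Adj u v
  | .minus => fun u v => u ≠ v ∧ ¬ H.Adj u v

/-- The incidence relation between a vertex and an edge given by a symbol `z`:
`+` means incident, `-` means non-incident, `0` never, `1` always. -/
def inc {W : Type*} (G : SimpleGraph W) : XYZ → W → G.edgeSet → Prop
  | .zero => fun _ _ => False
  | .one  => fun _ _ => True
  | .plus => fun v e => v ∈ (e : Sym2 W)
  | .minus => fun v e => v ∉ (e : Sym2 W)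

theorem rel_symm {W : Type*} (H : SimpleGraph W) (x : XYZ) {u v : W}
    (h : rel H x u v) : rel H x v u := by
  cases x with
  | zero => exact h.elim
  | one => exact (h : u ≠ v).symm
  | plus => exact H.adj_symm h
  | minus => exact ⟨(h.1).symm, fun h' => h.2 (H.adj_symm h')⟩

theorem rel_irrefl {W : Type*} (H : SimpleGraph W) (x : XYZ) {u : W}
    (h : rel H x u u) : False := by
  cases x with
  | zero => exact h
  | one => exact h rfl
  | plus => exact H.irrefl h
  | minus => exact h.1 rfl

end XYZ

/-- The `xyz`-transformation `G^{xyz}` of a graph `G`: its vertex set is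
`V(G) ⊕ E(G)`; two vertices of `G` are adjacent according to the symbol `x`
(applied to `G`), two edges according to the symbol `y` (applied to the line
graph of `G`), and a vertex and an edge according to the symbol `z`
(`+` = incidence graph `B(G)`, `-` = non-incidence graph `B^c(G)`,
`0` = no vertex-edge edges, `1` = all vertex-edge edges). -/
def xyzTransform {V : Type*} (G : SimpleGraph V) (x y z : XYZ) :
    SimpleGraph (V ⊕ G.edgeSet) where
  Adj a b :=
    match a, b with
    | Sum.inl u, Sum.inl v => XYZ.rel G x u v
    | Sum.inr e, Sum.inr f => XYZ.rel G.lineGraph y e f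
    | Sum.inl v, Sum.inr e => XYZ.inc G z v e
    | Sum.inr e, Sum.inl v => XYZ.inc G z v e
  symm := by
    constructor
    rintro (u | e) (v | f) h
    · exact XYZ.rel_symm G x h
    · exact h
    · exact h
    · exact XYZ.rel_symm G.lineGraph y h
  loopless := by
    constructor
    rintro (u | e) h
    · exact XYZ.rel_irrefl G x h
    · exact XYZ.rel_irrefl G.lineGraph y h

/-- The signless Laplacian matrix `Q(G) = D(G) + A(G)` of a graph. -/
noncomputable def signlessLaplacian {V : Type*} [Fintype V] (G : SimpleGraph V) :
    Matrix V V ℝ :=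
  Matrix.of fun u v =>
    (if u = v then (G.degree u : ℝ) else 0) + (if G.Adj u v then 1 else 0)

/-- The signless Laplacian characteristic polynomial
`f(λ, G) = det (λ I - Q(G))`, evaluated at a real number `λ`. -/
noncomputable def fQ {V : Type*} [Fintype V] (G : SimpleGraph V) (lam : ℝ) : ℝ :=
  Matrix.det (lam • (1 : Matrix V V ℝ) - signlessLaplacian G)


set_option linter.unusedSectionVars false
set_option maxHeartbeats 1000000

open Matrix Finset




namespace XYZProof

variable {V : Type*} [Fintype V] (G : SimpleGraph V) [Fintype G.edgeSet]

/-- The incidence matrix indexed by edges. -/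
noncomputable def Bmat : Matrix V G.edgeSet ℝ :=
  fun v e => if v ∈ (e : Sym2 V) then 1 else 0

lemma card_filter_mem (u : V) :
    (Finset.univ.filter fun e : G.edgeSet => u ∈ (e : Sym2 V)).card = G.degree u := by
  classical
  rw [← SimpleGraph.card_incidenceFinset_eq_degree]
  refine Finset.card_bij (fun e _ => (e : Sym2 V)) ?_ ?_ ?_
  · intro e he
    simp only [mem_filter] at he
    simp [SimpleGraph.mem_incidenceFinset, SimpleGraph.incidenceSet, e.2, he.2]
  · intro e₁ h₁ e₂ h₂ h
    exact Subtype.ext h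
  · intro s hs
    rw [SimpleGraph.mem_incidenceFinset] at hs
    exact ⟨⟨s, hs.1⟩, by simp [hs.2], rfl⟩

lemma filter_mem_pair {u v : V} (huv : u ≠ v) (h : G.Adj u v) :
    (Finset.univ.filter fun e : G.edgeSet => u ∈ (e : Sym2 V) ∧ v ∈ (e : Sym2 V))
      = {⟨s(u, v), h⟩} := by
  classical
  ext e
  simp only [mem_filter, mem_univ, true_and, mem_singleton]
  rw [Sym2.mem_and_mem_iff huv]
  constructor
  · intro he; exact Subtype.ext he
  · intro he; rw [he]

end XYZProof

namespace XYZProof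

variable {V : Type*} [Fintype V] (G : SimpleGraph V) [Fintype G.edgeSet]

lemma shared_vertex_unique {e f : G.edgeSet} (hef : e ≠ f) {u w : V}
    (hu : u ∈ (e : Sym2 V) ∧ u ∈ (f : Sym2 V)) (hw : w ∈ (e : Sym2 V) ∧ w ∈ (f : Sym2 V)) :
    u = w := by
  by_contra h
  have he : (e : Sym2 V) = s(u, w) := (Sym2.mem_and_mem_iff h).mp ⟨hu.1, hw.1⟩
  have hf : (f : Sym2 V) = s(u, w) := (Sym2.mem_and_mem_iff h).mp ⟨hu.2, hw.2⟩
  exact hef (Subtype.ext (he.trans hf.symm))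

lemma filter_shared {e f : G.edgeSet} (hef : e ≠ f) (u : V)
    (hu : u ∈ (e : Sym2 V) ∧ u ∈ (f : Sym2 V)) :
    (Finset.univ.filter fun v : V => v ∈ (e : Sym2 V) ∧ v ∈ (f : Sym2 V)) = {u} := by
  ext w
  simp only [mem_filter, mem_univ, true_and, mem_singleton]
  constructor
  · intro hw; exact (shared_vertex_unique G hef hw hu)
  · intro hw; subst hw; exact hu

lemma card_filter_mem_sym2 {e : G.edgeSet} :
    (Finset.univ.filter fun v : V => v ∈ (e : Sym2 V)).card = 2 := by
  classical
  obtain ⟨s, hs⟩ := e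
  induction s with
  | _ a b =>
    have hab : a ≠ b := (G.mem_edgeSet.mp hs).ne
    have : (Finset.univ.filter fun v : V => v ∈ (s(a,b) : Sym2 V)) = {a, b} := by
      ext w; simp [Sym2.mem_iff]
    rw [this, Finset.card_insert_of_notMem (by simp [hab]), Finset.card_singleton]

end XYZProof

namespace XYZProof

variable {V : Type*} [Fintype V] (G : SimpleGraph V) [Fintype G.edgeSet] {r : ℕ}

lemma card_filter_lineAdj (hreg : G.IsRegularOfDegree r) (e : G.edgeSet) :
    (Finset.univ.filter fun f : G.edgeSet => G.lineGraph.Adj e f).card = 2 * r - 2 := by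
  classical
  obtain ⟨s, hs⟩ := e
  induction s with
  | _ a b =>
    have hab : G.Adj a b := G.mem_edgeSet.mp hs
    have hne : a ≠ b := hab.ne
    set e : G.edgeSet := ⟨s(a, b), hs⟩ with he
    have hfilter : (Finset.univ.filter fun f : G.edgeSet => G.lineGraph.Adj e f)
        = ((Finset.univ.filter fun f : G.edgeSet => a ∈ (f : Sym2 V)) ∪
           (Finset.univ.filter fun f : G.edgeSet => b ∈ (f : Sym2 V))).erase e := by
      ext f
      simp only [mem_filter, mem_univ, true_and, Finset.mem_erase, Finset.mem_union,
        SimpleGraph.lineGraph_adj_iff_exists]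
      constructor
      · rintro ⟨hef, v, hv1, hv2⟩
        refine ⟨Ne.symm hef, ?_⟩
        have : v = a ∨ v = b := by
          have : v ∈ (e : Sym2 V) := hv1
          simpa [he, Sym2.mem_iff] using this
        rcases this with h | h <;> subst h
        · exact Or.inl hv2
        · exact Or.inr hv2
      · rintro ⟨hfe, h | h⟩
        · exact ⟨Ne.symm hfe, a, by simp [he], h⟩
        · exact ⟨Ne.symm hfe, b, by simp [he], h⟩
    rw [hfilter]
    have hinter : ((Finset.univ.filter fun f : G.edgeSet => a ∈ (f : Sym2 V)) ∩
        (Finset.univ.filter fun f : G.edgeSet => b ∈ (f : Sym2 V))) = {e} := by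
      rw [← Finset.filter_and]
      exact filter_mem_pair G hne hab
    have hcard : ((Finset.univ.filter fun f : G.edgeSet => a ∈ (f : Sym2 V)) ∪
          (Finset.univ.filter fun f : G.edgeSet => b ∈ (f : Sym2 V))).card + 1 = r + r := by
      have := Finset.card_union_add_card_inter
        (Finset.univ.filter fun f : G.edgeSet => a ∈ (f : Sym2 V))
        (Finset.univ.filter fun f : G.edgeSet => b ∈ (f : Sym2 V))
      rw [hinter, Finset.card_singleton, card_filter_mem, card_filter_mem, hreg a, hreg b] at this
      exact this
    have hmem : e ∈ ((Finset.univ.filter fun f : G.edgeSet => a ∈ (f : Sym2 V)) ∪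
        (Finset.univ.filter fun f : G.edgeSet => b ∈ (f : Sym2 V))) := by
      simp [he, Sym2.mem_iff]
    rw [Finset.card_erase_of_mem hmem]
    omega

lemma degree_big_inl (v : V) :
    (xyzTransform G XYZ.zero XYZ.plus XYZ.plus).degree (Sum.inl v) = G.degree v := by
  classical
  rw [SimpleGraph.degree, ← card_filter_mem G v]
  have : (xyzTransform G XYZ.zero XYZ.plus XYZ.plus).neighborFinset (Sum.inl v)
      = (Finset.univ.filter fun e : G.edgeSet => v ∈ (e : Sym2 V)).image Sum.inr := by
    ext a
    rcases a with u | e <;> simp only [SimpleGraph.mem_neighborFinset] <;>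
      simp [SimpleGraph.mem_neighborFinset, xyzTransform, XYZ.rel, XYZ.inc]
  rw [this, Finset.card_image_of_injective _ Sum.inr_injective]

lemma degree_big_inr (hreg : G.IsRegularOfDegree r) (hr : 1 ≤ r) (e : G.edgeSet) :
    (xyzTransform G XYZ.zero XYZ.plus XYZ.plus).degree (Sum.inr e) = 2 * r := by
  classical
  rw [SimpleGraph.degree]
  have : (xyzTransform G XYZ.zero XYZ.plus XYZ.plus).neighborFinset (Sum.inr e)
      = ((Finset.univ.filter fun v : V => v ∈ (e : Sym2 V)).image Sum.inl) ∪
        ((Finset.univ.filter fun f : G.edgeSet => G.lineGraph.Adj e f).image Sum.inr) := by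
    ext a
    rcases a with u | f <;> simp only [SimpleGraph.mem_neighborFinset] <;>
      simp [SimpleGraph.mem_neighborFinset, xyzTransform, XYZ.rel, XYZ.inc,
        SimpleGraph.lineGraph_adj_iff_exists, eq_comm]
  rw [this, Finset.card_union_of_disjoint, Finset.card_image_of_injective _ Sum.inl_injective,
    Finset.card_image_of_injective _ Sum.inr_injective, card_filter_mem_sym2,
    card_filter_lineAdj G hreg]
  · omega
  · simp [Finset.disjoint_left]

end XYZProof

namespace XYZProof

variable {V : Type*} [Fintype V] (G : SimpleGraph V) [Fintype G.edgeSet] {r : ℕ}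

lemma Bmat_mul_transpose : Bmat G * (Bmat G)ᵀ = signlessLaplacian G := by
  classical
  ext u v
  simp only [Matrix.mul_apply, Matrix.transpose_apply, Bmat, signlessLaplacian, Matrix.of_apply]
  simp_rw [ite_zero_mul_ite_zero, one_mul, Finset.sum_boole]
  by_cases huv : u = v
  · subst huv
    simp only [and_self, if_pos rfl]
    rw [card_filter_mem G u]
    simp [G.loopless.irrefl u]
  · rw [if_neg huv]
    by_cases hadj : G.Adj u v
    · rw [if_pos hadj, filter_mem_pair G huv hadj, Finset.card_singleton]
      norm_num
    · rw [if_neg hadj]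
      have : (Finset.univ.filter fun e : G.edgeSet =>
          u ∈ (e : Sym2 V) ∧ v ∈ (e : Sym2 V)) = ∅ := by
        ext e
        simp only [Finset.mem_filter, Finset.mem_univ, true_and, Finset.notMem_empty,
          iff_false]
        intro h
        have he : (e : Sym2 V) = s(u, v) := (Sym2.mem_and_mem_iff huv).mp h
        exact hadj (G.mem_edgeSet.mp (he ▸ e.2))
      rw [this]
      norm_num

lemma transpose_mul_Bmat (e f : G.edgeSet) :
    ((Bmat G)ᵀ * Bmat G) e f
      = if e = f then 2 else if G.lineGraph.Adj e f then 1 else 0 := by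
  classical
  simp only [Matrix.mul_apply, Matrix.transpose_apply, Bmat]
  simp_rw [ite_zero_mul_ite_zero, one_mul, Finset.sum_boole]
  by_cases hef : e = f
  · subst hef
    simp only [and_self, if_pos rfl]
    rw [card_filter_mem_sym2 G]
    norm_num
  · rw [if_neg hef]
    by_cases hadj : G.lineGraph.Adj e f
    · rw [if_pos hadj]
      obtain ⟨-, u, hu⟩ := SimpleGraph.lineGraph_adj_iff_exists.mp hadj
      rw [filter_shared G hef u hu, Finset.card_singleton]
      norm_num
    · rw [if_neg hadj]
      have : (Finset.univ.filter fun v : V =>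
          v ∈ (e : Sym2 V) ∧ v ∈ (f : Sym2 V)) = ∅ := by
        ext w
        simp only [Finset.mem_filter, Finset.mem_univ, true_and, Finset.notMem_empty,
          iff_false]
        intro h
        exact hadj (SimpleGraph.lineGraph_adj_iff_exists.mpr ⟨hef, w, h⟩)
      rw [this]
      norm_num

@[simp] lemma big_adj_inl_inl (u v : V) :
    (xyzTransform G XYZ.zero XYZ.plus XYZ.plus).Adj (Sum.inl u) (Sum.inl v) ↔ False :=
  Iff.rfl

@[simp] lemma big_adj_inl_inr (v : V) (e : G.edgeSet) :
    (xyzTransform G XYZ.zero XYZ.plus XYZ.plus).Adj (Sum.inl v) (Sum.inr e) ↔ v ∈ (e : Sym2 V) :=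
  Iff.rfl

@[simp] lemma big_adj_inr_inl (v : V) (e : G.edgeSet) :
    (xyzTransform G XYZ.zero XYZ.plus XYZ.plus).Adj (Sum.inr e) (Sum.inl v) ↔ v ∈ (e : Sym2 V) :=
  Iff.rfl

@[simp] lemma big_adj_inr_inr (e f : G.edgeSet) :
    (xyzTransform G XYZ.zero XYZ.plus XYZ.plus).Adj (Sum.inr e) (Sum.inr f) ↔
      G.lineGraph.Adj e f :=
  Iff.rfl

lemma big_block (hreg : G.IsRegularOfDegree r) (hr : 1 ≤ r) (lam : ℝ) :
    fQ (xyzTransform G XYZ.zero XYZ.plus XYZ.plus) lam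
      = (Matrix.fromBlocks ((lam - r) • 1) (-(Bmat G)) (-(Bmat G)ᵀ)
          ((lam - 2 * r + 2) • 1 - (Bmat G)ᵀ * Bmat G)).det := by
  rw [fQ]
  congr 1
  ext a b
  rcases a with u | e <;> rcases b with v | f
  · simp only [Matrix.sub_apply, Matrix.smul_apply, Matrix.one_apply, signlessLaplacian,
      Matrix.of_apply, Matrix.fromBlocks_apply₁₁, Sum.inl.injEq, big_adj_inl_inl,
      degree_big_inl, if_false]
    by_cases huv : u = v
    · subst huv
      simp [hreg u]
    · simp [huv]
  · simp [Matrix.sub_apply, Matrix.smul_apply, Matrix.one_apply, signlessLaplacian, Bmat]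
  · simp [Matrix.sub_apply, Matrix.smul_apply, Matrix.one_apply, signlessLaplacian, Bmat]
  · simp only [Matrix.sub_apply, Matrix.smul_apply, Matrix.one_apply, signlessLaplacian,
      Matrix.of_apply, Matrix.fromBlocks_apply₂₂, Sum.inr.injEq, big_adj_inr_inr,
      degree_big_inr G hreg hr, transpose_mul_Bmat]
    by_cases hef : e = f
    · subst hef
      simp [(G.lineGraph).loopless.irrefl e]
    · simp [hef]

end XYZProof

namespace XYZProof

lemma charpoly_eval {ι : Type*} [Fintype ι] [DecidableEq ι] (M : Matrix ι ι ℝ) (x : ℝ) :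
    (Matrix.charpoly M).eval x = (x • (1 : Matrix ι ι ℝ) - M).det := by
  rw [Matrix.charpoly, ← Polynomial.coe_evalRingHom, RingHom.map_det]
  congr 1
  ext i j
  by_cases h : i = j
  · subst h
    simp [Matrix.charmatrix_apply_eq, Matrix.one_apply]
  · simp [Matrix.charmatrix_apply_ne _ _ _ h, Matrix.one_apply, h]

end XYZProof

namespace XYZProof

variable {V : Type*} [Fintype V] (G : SimpleGraph V) [Fintype G.edgeSet] {r : ℕ}

lemma det_big (hreg : G.IsRegularOfDegree r) (hr : 1 ≤ r) {n m : ℕ}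
    (hn : Fintype.card V = n) (hm : Fintype.card G.edgeSet = m) (hmn : n ≤ m)
    (lam : ℝ) (ha : lam - (r : ℝ) ≠ 0) (ha1 : lam - r + 1 ≠ 0) (hc : lam - 2 * r + 2 ≠ 0) :
    fQ (xyzTransform G XYZ.zero XYZ.plus XYZ.plus) lam
      = (lam - 2 * r + 2) ^ (m - n) * ((lam - r + 1) ^ n *
          fQ G ((lam - 2 * r + 2) * (lam - r) / (lam - r + 1))) := by
  set a : ℝ := lam - r with ha_def
  set c : ℝ := lam - 2 * r + 2 with hc_def
  set t : ℝ := c * a / (a + 1) with ht_def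
  have ha1' : a + 1 ≠ 0 := by rwa [ha_def]
  have ht : t ≠ 0 := div_ne_zero (mul_ne_zero hc ha) ha1'
  have hst : (1 + a⁻¹) * t = c := by
    rw [ht_def]
    field_simp
  have has' : a * (1 + a⁻¹) = a + 1 := by field_simp
  letI : Invertible (a • (1 : Matrix V V ℝ)) := by
    refine ⟨a⁻¹ • (1 : Matrix V V ℝ), ?_, ?_⟩ <;>
      simp [Matrix.smul_mul, Matrix.mul_smul, smul_smul,
        inv_mul_cancel₀ ha, mul_inv_cancel₀ ha]
  rw [big_block G hreg hr lam, ← ha_def, ← hc_def, Matrix.det_fromBlocks₁₁]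
  have hinv : ⅟(a • (1 : Matrix V V ℝ)) = a⁻¹ • (1 : Matrix V V ℝ) := rfl
  set M : Matrix G.edgeSet G.edgeSet ℝ := (Bmat G)ᵀ * Bmat G with hM_def
  have hschur : (c • (1 : Matrix G.edgeSet G.edgeSet ℝ) - M)
      - (-(Bmat G)ᵀ) * ⅟(a • (1 : Matrix V V ℝ)) * (-(Bmat G))
      = (1 + a⁻¹) • (t • (1 : Matrix G.edgeSet G.edgeSet ℝ) - M) := by
    rw [hinv]
    have h1 : (-(Bmat G)ᵀ) * (a⁻¹ • (1 : Matrix V V ℝ)) * (-(Bmat G)) = a⁻¹ • M := by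
      rw [hM_def, Matrix.neg_mul, Matrix.mul_neg, Matrix.neg_mul, neg_neg,
        Matrix.mul_smul, Matrix.mul_one, Matrix.smul_mul]
    rw [h1, smul_sub, smul_smul, hst]
    module
  rw [hschur, Matrix.det_smul, Matrix.det_smul, Matrix.det_one, mul_one, hn, hm]
  have h2 : t • (1 : Matrix G.edgeSet G.edgeSet ℝ) - M
      = t • ((1 : Matrix G.edgeSet G.edgeSet ℝ) - (Bmat G)ᵀ * (t⁻¹ • Bmat G)) := by
    rw [Matrix.mul_smul, smul_sub, smul_smul, mul_inv_cancel₀ ht, one_smul, hM_def]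
  rw [h2, Matrix.det_smul, hm, Matrix.det_one_sub_mul_comm]
  have h3 : (t⁻¹ • Bmat G) * (Bmat G)ᵀ = t⁻¹ • signlessLaplacian G := by
    rw [Matrix.smul_mul, Bmat_mul_transpose]
  rw [h3]
  have h4 : (1 : Matrix V V ℝ) - t⁻¹ • signlessLaplacian G
      = t⁻¹ • (t • (1 : Matrix V V ℝ) - signlessLaplacian G) := by
    rw [smul_sub, smul_smul, inv_mul_cancel₀ ht, one_smul]
  rw [h4, Matrix.det_smul, hn]
  have hfq : (t • (1 : Matrix V V ℝ) - signlessLaplacian G).det = fQ G t := rfl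
  rw [hfq]
  have e1 : (1 + a⁻¹) ^ m = (1 + a⁻¹) ^ (m - n) * (1 + a⁻¹) ^ n := by
    rw [← pow_add, Nat.sub_add_cancel hmn]
  have e2 : t ^ m = t ^ (m - n) * t ^ n := by
    rw [← pow_add, Nat.sub_add_cancel hmn]
  have e3 : t ^ n * (t⁻¹) ^ n = 1 := by
    rw [← mul_pow, mul_inv_cancel₀ ht, one_pow]
  calc a ^ n * ((1 + a⁻¹) ^ m * (t ^ m * ((t⁻¹) ^ n * fQ G t)))
      = ((1 + a⁻¹) * t) ^ (m - n) * ((a * (1 + a⁻¹)) ^ n * ((t ^ n * (t⁻¹) ^ n) * fQ G t)) := by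
        rw [e1, e2, mul_pow, mul_pow]; ring
    _ = c ^ (m - n) * ((a + 1) ^ n * fQ G t) := by rw [hst, has', e3, one_mul]

end XYZProof

namespace XYZProof

lemma prod_split {M : Type*} [CommMonoid M] {n : ℕ} (hn : 0 < n) (F : Fin n → M) :
    ∏ i : Fin n, F i
      = (∏ i : Fin (n - 1), F (Fin.castLE (Nat.sub_le n 1) i)) * F ⟨n - 1, by omega⟩ := by
  obtain ⟨k, rfl⟩ : ∃ k, n = k + 1 := ⟨n - 1, by omega⟩
  rw [Fin.prod_univ_castSucc]
  rfl

variable {V : Type*} [Fintype V] (G : SimpleGraph V) [Fintype G.edgeSet]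

lemma fQ_eval_charpoly {W : Type*} [Fintype W] [DecidableEq W] (H : SimpleGraph W) (x : ℝ) :
    Polynomial.eval x (Matrix.charpoly (signlessLaplacian H)) = fQ H x := by
  rw [fQ, charpoly_eval]
  congr 1
  ext i j
  by_cases h : i = j <;> simp [Matrix.one_apply, h]

end XYZProof

-- MORE AUX HERE
theorem signless_charpoly_xyz_zpp {V : Type*} [Fintype V] (G : SimpleGraph V) (r n m : ℕ)
    (hn : Fintype.card V = n) (hm : Fintype.card G.edgeSet = m)
    (hreg : G.IsRegularOfDegree r) (hr2 : 2 ≤ r) (hn0 : 0 < n)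
    (q : Fin n → ℝ) (hmono : Monotone q)
    (hlast : q ⟨n - 1, by omega⟩ = 2 * r)
    (hq : ∀ x : ℝ, fQ G x = ∏ i : Fin n, (x - q i)) :
    ∀ lam : ℝ,
      fQ (xyzTransform G XYZ.zero XYZ.plus XYZ.plus) lam =
        ((lam - r) * (lam - 4 * r + 2) - 2 * r) * (lam - 2 * r + 2) ^ (m - n) *
          ∏ i : Fin (n - 1), ((lam - r) * (lam - 2 * r + 2 - (q (Fin.castLE (Nat.sub_le n 1) i))) - (q (Fin.castLE (Nat.sub_le n 1) i))) := by
  have hr1 : 1 ≤ r := by omega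
  -- handshake: n * r = 2 * m, hence n ≤ m
  have hmn : n ≤ m := by
    have hhs := G.sum_degrees_eq_twice_card_edges
    have hsum : ∑ v : V, G.degree v = n * r := by
      rw [Finset.sum_congr rfl fun v _ => hreg v, Finset.sum_const, smul_eq_mul,
        Finset.card_univ, hn]
    have hcard : G.edgeFinset.card = m := by
      rw [SimpleGraph.edgeFinset_card, hm]
    rw [hsum, hcard] at hhs
    have h2n : n * 2 ≤ n * r := Nat.mul_le_mul_left n hr2
    omega
  have stepA : ∀ x : ℝ, x - (r : ℝ) ≠ 0 → x - r + 1 ≠ 0 → x - 2 * r + 2 ≠ 0 →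
      fQ (xyzTransform G XYZ.zero XYZ.plus XYZ.plus) x
        = (x - 2 * r + 2) ^ (m - n) *
            ∏ i : Fin n, ((x - r) * (x - 2 * r + 2 - q i) - q i) := by
    intro x h1 h2 h3
    rw [XYZProof.det_big G hreg hr1 hn hm hmn x h1 h2 h3, hq]
    congr 1
    have hfac : ∀ i : Fin n,
        (x - r) * (x - 2 * r + 2 - q i) - q i
          = (x - r + 1) * ((x - 2 * r + 2) * (x - r) / (x - r + 1) - q i) := by
      intro i
      field_simp
      ring
    calc (x - r + 1) ^ n * ∏ i : Fin n, ((x - 2 * r + 2) * (x - r) / (x - r + 1) - q i)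
        = ∏ i : Fin n, (x - r + 1) * ((x - 2 * r + 2) * (x - r) / (x - r + 1) - q i) := by
          rw [Finset.prod_mul_distrib, Finset.prod_const, Finset.card_univ, Fintype.card_fin]
      _ = ∏ i : Fin n, ((x - r) * (x - 2 * r + 2 - q i) - q i) :=
          Finset.prod_congr rfl fun i _ => (hfac i).symm
  -- polynomial extension
  classical
  set p1 : Polynomial ℝ :=
    Matrix.charpoly (signlessLaplacian (xyzTransform G XYZ.zero XYZ.plus XYZ.plus)) with hp1_def
  set p2 : Polynomial ℝ :=
    (Polynomial.X - Polynomial.C (2 * (r : ℝ)) + Polynomial.C 2) ^ (m - n) *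
      ∏ i : Fin n, ((Polynomial.X - Polynomial.C (r : ℝ)) *
        (Polynomial.X - Polynomial.C (2 * (r : ℝ)) + Polynomial.C 2 - Polynomial.C (q i)) -
          Polynomial.C (q i)) with hp2_def
  have hp1 : ∀ x : ℝ, p1.eval x = fQ (xyzTransform G XYZ.zero XYZ.plus XYZ.plus) x := by
    intro x
    rw [hp1_def, XYZProof.fQ_eval_charpoly]
  have hp2 : ∀ x : ℝ, p2.eval x
      = (x - 2 * r + 2) ^ (m - n) * ∏ i : Fin n, ((x - r) * (x - 2 * r + 2 - q i) - q i) := by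
    intro x
    rw [hp2_def]
    simp [Polynomial.eval_prod, Polynomial.eval_mul, Polynomial.eval_pow, mul_comm]
  have hfin : ({(r : ℝ), (r : ℝ) - 1, 2 * (r : ℝ) - 2} : Set ℝ).Finite := by
    exact (Set.finite_singleton _).insert _ |>.insert _
  have hsub : ({(r : ℝ), (r : ℝ) - 1, 2 * (r : ℝ) - 2} : Set ℝ)ᶜ ⊆
      {x : ℝ | p1.eval x = p2.eval x} := by
    intro x hx
    simp only [Set.mem_compl_iff, Set.mem_insert_iff, Set.mem_singleton_iff, not_or] at hx
    obtain ⟨hx1, hx2, hx3⟩ := hx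
    have h1 : x - (r : ℝ) ≠ 0 := sub_ne_zero.mpr hx1
    have h2 : x - (r : ℝ) + 1 ≠ 0 := by
      intro h; exact hx2 (by linarith)
    have h3 : x - 2 * (r : ℝ) + 2 ≠ 0 := by
      intro h; exact hx3 (by linarith)
    show p1.eval x = p2.eval x
    rw [hp1, hp2, stepA x h1 h2 h3]
  have hp12 : p1 = p2 :=
    Polynomial.eq_of_infinite_eval_eq p1 p2 (hfin.infinite_compl.mono hsub)
  have key : ∀ x : ℝ, fQ (xyzTransform G XYZ.zero XYZ.plus XYZ.plus) x
      = (x - 2 * r + 2) ^ (m - n) * ∏ i : Fin n, ((x - r) * (x - 2 * r + 2 - q i) - q i) := by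
    intro x
    rw [← hp1, hp12, hp2]
  intro lam
  rw [key lam, XYZProof.prod_split hn0 (fun i => (lam - r) * (lam - 2 * r + 2 - q i) - q i)]
  have hlast' : q ⟨n - 1, by omega⟩ = 2 * (r : ℝ) := hlast
  rw [hlast']
  ring
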